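/- Let H be a factorial commutative cancellative monoid and M a submonoid of H containing every unit of H. Then every element of M that is square-free in M is square-free in H, if and only if, every atom of M is square-free in H and any two non-associated atoms of M are relatively prime in H. -/

import Mathlib

section Aux

open scoped Classical

variable {H : Type*} [CancelCommMonoid H]

def MyPrime (p : H) : Prop :=
  ¬ IsUnit p ∧ ∀ b c : H, p ∣ b * c → p ∣ b ∨ p ∣ c

theorem myprime_dvd_prod {p : H} (hp : MyPrime p) {l : Multiset H} (h : p ∣ l.prod) :
    ∃ a ∈ l, p ∣ a := by
  induction l using Multiset.induction with
  | empty =>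
    simp only [Multiset.prod_zero] at h
    exact absurd (isUnit_of_dvd_one h) hp.1
  | cons a t ih =>
    rw [Multiset.prod_cons] at h
    rcases hp.2 _ _ h with h | h
    · exact ⟨a, Multiset.mem_cons_self a t, h⟩
    · obtain ⟨b, hb, hd⟩ := ih h
      exact ⟨b, Multiset.mem_cons_of_mem hb, hd⟩

theorem exists_myprime_dvd
    (hfact : ∀ a : H, IsUnit a ∨ ∃ l : Multiset H, (∀ p ∈ l, MyPrime p) ∧ l.prod = a)
    {a : H} (ha : ¬ IsUnit a) : ∃ p : H, MyPrime p ∧ p ∣ a := by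
  rcases hfact a with h | ⟨l, hl, hprod⟩
  · exact absurd h ha
  rcases Multiset.empty_or_exists_mem l with rfl | ⟨p, hp⟩
  · simp only [Multiset.prod_zero] at hprod
    exact absurd (hprod ▸ isUnit_one) ha
  · exact ⟨p, hl p hp, hprod ▸ Multiset.dvd_prod hp⟩

theorem card_unique : ∀ (la : Multiset H) (u : H), IsUnit u → ∀ (lb : Multiset H),
    (∀ p ∈ la, MyPrime p) → (∀ p ∈ lb, MyPrime p) → la.prod = u * lb.prod →
    Multiset.card la = Multiset.card lb := by
  intro la
  induction la using Multiset.induction with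
  | empty =>
    intro u hu lb _ hlb h
    simp only [Multiset.prod_zero] at h
    rcases Multiset.empty_or_exists_mem lb with rfl | ⟨q, hq⟩
    · rfl
    · exfalso
      have : q ∣ u * lb.prod := Dvd.dvd.mul_left (Multiset.dvd_prod hq) u
      exact (hlb q hq).1 (isUnit_of_dvd_one (h ▸ this))
  | cons p t ih =>
    intro u hu lb hla hlb h
    have hp : MyPrime p := hla p (Multiset.mem_cons_self p t)
    have hdvd : p ∣ u * lb.prod := ⟨t.prod, by rw [← h, Multiset.prod_cons]⟩
    rcases hp.2 _ _ hdvd with h1 | h1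
    · exact absurd (isUnit_of_dvd_unit h1 hu) hp.1
    obtain ⟨q, hq, s, hs⟩ := myprime_dvd_prod hp h1
    have hqprime := hlb q hq
    have hsunit : IsUnit s := by
      rcases hqprime.2 p s (dvd_of_eq hs) with h2 | h2
      · obtain ⟨w, hw⟩ := h2
        have h3 : q * (w * s) = q * 1 := by
          rw [mul_one, ← mul_assoc, ← hw, ← hs]
        exact IsUnit.of_mul_eq_one (a := s) w (by rw [mul_comm]; exact mul_left_cancel h3)
      · exfalso
        obtain ⟨w, hw⟩ := h2
        apply hp.1
        have h3 : q * (p * w) = q * 1 := by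
          rw [mul_one, mul_left_comm, ← hw, ← hs]
        exact IsUnit.of_mul_eq_one (a := p) w (mul_left_cancel h3)
    obtain ⟨lb', rfl⟩ := Multiset.exists_cons_of_mem hq
    have key : t.prod = (u * s) * lb'.prod := by
      apply mul_left_cancel (a := p)
      rw [← Multiset.prod_cons, h, Multiset.prod_cons, hs]
      simp only [mul_comm, mul_left_comm, mul_assoc]
    have := ih (u * s) (hu.mul hsunit) lb'
      (fun x hx => hla x (Multiset.mem_cons_of_mem hx))
      (fun x hx => hlb x (Multiset.mem_cons_of_mem hx)) key
    simp [this]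


variable (hfact : ∀ a : H, IsUnit a ∨ ∃ l : Multiset H, (∀ p ∈ l, MyPrime p) ∧ l.prod = a)

open Classical in
noncomputable def Len (a : H) : ℕ :=
  if h : IsUnit a then 0 else ((hfact a).resolve_left h).choose.card

theorem len_eq {a : H} (ha : ¬ IsUnit a) {l : Multiset H}
    (hl : ∀ p ∈ l, MyPrime p) (hprod : l.prod = a) : Len hfact a = Multiset.card l := by
  have h := ((hfact a).resolve_left ha).choose_spec
  unfold Len
  rw [dif_neg ha]
  exact card_unique _ 1 isUnit_one l h.1 hl (by rw [one_mul, hprod, h.2])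

theorem len_pos {a : H} (ha : ¬ IsUnit a) : 0 < Len hfact a := by
  have h := ((hfact a).resolve_left ha).choose_spec
  unfold Len
  rw [dif_neg ha]
  rcases Multiset.empty_or_exists_mem ((hfact a).resolve_left ha).choose with he | ⟨p, hp⟩
  · rw [he] at h
    simp only [Multiset.prod_zero] at h
    exact absurd (h.2 ▸ isUnit_one) ha
  · exact Multiset.card_pos.mpr (fun h0 => by simp [h0] at hp)

theorem exists_fact {a : H} (ha : ¬ IsUnit a) :
    ∃ l : Multiset H, (∀ p ∈ l, MyPrime p) ∧ l.prod = a ∧ Multiset.card l = Len hfact a := by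
  have h := ((hfact a).resolve_left ha).choose_spec
  exact ⟨_, h.1, h.2, (len_eq hfact ha h.1 h.2).symm⟩

theorem len_mul {b c : H} (hb : ¬ IsUnit b) (hc : ¬ IsUnit c) :
    Len hfact (b * c) = Len hfact b + Len hfact c := by
  obtain ⟨lb, hlb, hpb, hcb⟩ := exists_fact hfact hb
  obtain ⟨lc, hlc, hpc, hcc⟩ := exists_fact hfact hc
  have hbc : ¬ IsUnit (b * c) := fun h => hb (isUnit_of_mul_isUnit_left h)
  have := len_eq hfact hbc (l := lb + lc)
    (fun p hp => by rcases Multiset.mem_add.mp hp with h | h; exacts [hlb p h, hlc p h])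
    (by rw [Multiset.prod_add, hpb, hpc])
  rw [this, Multiset.card_add, hcb, hcc]

theorem prime_sq_dvd_mul {p x y : H} (hp : MyPrime p) (hx : Squarefree x)
    (h : p * p ∣ x * y) (hpx : p ∣ x) : p ∣ y := by
  obtain ⟨x', rfl⟩ := hpx
  obtain ⟨k, hk⟩ := h
  have h2 : p * (x' * y) = p * (p * k) := by
    rw [← mul_assoc, hk, mul_assoc]
  rcases hp.2 x' y ⟨k, mul_left_cancel h2⟩ with h3 | h3
  · exact absurd (hx p (mul_dvd_mul_left p h3)) hp.1
  · exact h3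

include hfact in
theorem sf_mul {x y : H} (hx : Squarefree x) (hy : Squarefree y)
    (hxy : IsRelPrime x y) : Squarefree (x * y) := by
  intro z hz
  by_contra hzu
  obtain ⟨p, hp, hpz⟩ := exists_myprime_dvd hfact hzu
  have hpp : p * p ∣ x * y := (mul_dvd_mul hpz hpz).trans hz
  rcases hp.2 x y ((dvd_mul_right p p).trans hpp) with h | h
  · exact hp.1 (hxy h (prime_sq_dvd_mul hp hx hpp h))
  · have hpp' : p * p ∣ y * x := by rwa [mul_comm y x]
    exact hp.1 (hxy (prime_sq_dvd_mul hp hy hpp' h) h)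

include hfact in
theorem relPrime_prod {u : H} {l : Multiset H} (h : ∀ v ∈ l, IsRelPrime u v) :
    IsRelPrime u l.prod := by
  intro d hdu hdl
  by_contra hd
  obtain ⟨p, hp, hpd⟩ := exists_myprime_dvd hfact hd
  obtain ⟨v, hv, hpv⟩ := myprime_dvd_prod hp (hpd.trans hdl)
  exact hp.1 (h v hv (hpd.trans hdu) hpv)

theorem prods_dvd : ∀ (l : Multiset H), (∀ q ∈ l, MyPrime q) → Squarefree l.prod →
    ∀ a : H, Squarefree a → (∀ q ∈ l, q ∣ a) → l.prod ∣ a := by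
  intro l
  induction l using Multiset.induction with
  | empty => intro _ _ a _ _; simpa using one_dvd a
  | cons q t ih =>
    intro hl hsf a ha hdvd
    have hq : MyPrime q := hl q (Multiset.mem_cons_self q t)
    obtain ⟨a', rfl⟩ := hdvd q (Multiset.mem_cons_self q t)
    have hta : ∀ r ∈ t, r ∣ a' := by
      intro r hr
      rcases (hl r (Multiset.mem_cons_of_mem hr)).2 q a' (hdvd r (Multiset.mem_cons_of_mem hr)) with h | h
      · exfalso
        obtain ⟨s, hs⟩ := h
        have : r * r ∣ (q ::ₘ t).prod := by
          rw [Multiset.prod_cons, hs]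
          exact mul_dvd_mul (Dvd.intro s rfl) (Multiset.dvd_prod hr)
        exact (hl r (Multiset.mem_cons_of_mem hr)).1 (hsf r this)
      · exact h
    have hint : t.prod ∣ a' := ih (fun r hr => hl r (Multiset.mem_cons_of_mem hr))
      (hsf.squarefree_of_dvd (by rw [Multiset.prod_cons]; exact dvd_mul_left t.prod q))
      a' (ha.squarefree_of_dvd (dvd_mul_left a' q)) hta
    rw [Multiset.prod_cons]
    exact mul_dvd_mul_left q hint


def IsAtomM (M : Submonoid H) (a : H) : Prop :=
  a ∈ M ∧ ¬ IsUnit a ∧ ∀ b c : H, b ∈ M → c ∈ M → a = b * c → IsUnit b ∨ IsUnit c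

theorem exists_atom_factorization (M : Submonoid H) :
    ∀ (n : ℕ) (a : H), a ∈ M → ¬ IsUnit a → Len hfact a ≤ n →
      ∃ l : Multiset H, l ≠ 0 ∧ (∀ x ∈ l, IsAtomM M x) ∧ l.prod = a := by
  intro n
  induction n with
  | zero =>
    intro a _ ha hlen
    exact absurd hlen (by have := len_pos hfact ha; omega)
  | succ n ih =>
    intro a haM ha hlen
    by_cases hat : ∀ b c : H, b ∈ M → c ∈ M → a = b * c → IsUnit b ∨ IsUnit c
    · exact ⟨{a}, by simp, by simpa [IsAtomM] using ⟨haM, ha, hat⟩, by simp⟩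
    · push_neg at hat
      obtain ⟨b, c, hbM, hcM, habc, hbu, hcu⟩ := hat
      have hmul := len_mul hfact hbu hcu
      have hpb := len_pos hfact hbu
      have hpc := len_pos hfact hcu
      rw [← habc] at hmul
      obtain ⟨lb, hlb0, hlb, hlbp⟩ := ih b hbM hbu (by omega)
      obtain ⟨lc, hlc0, hlc, hlcp⟩ := ih c hcM hcu (by omega)
      refine ⟨lb + lc, by simp [hlb0], ?_, by rw [Multiset.prod_add, hlbp, hlcp, habc]⟩
      intro x hx
      rcases Multiset.mem_add.mp hx with h | h
      exacts [hlb x h, hlc x h]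

include hfact in
theorem sf_prod : ∀ l : Multiset H, (∀ x ∈ l, Squarefree x) →
    (∀ x ∈ l, ∀ y ∈ l.erase x, IsRelPrime x y) → Squarefree l.prod := by
  intro l
  induction l using Multiset.induction with
  | empty => simpa using squarefree_one
  | cons x t ih =>
    intro hsf hrel
    rw [Multiset.prod_cons]
    have hxt : ∀ v ∈ t, IsRelPrime x v := by
      intro v hv
      have := hrel x (Multiset.mem_cons_self x t)
      rw [Multiset.erase_cons_head] at this
      exact this v hv
    refine sf_mul hfact (hsf x (Multiset.mem_cons_self x t)) ?_ (relPrime_prod hfact hxt)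
    apply ih (fun y hy => hsf y (Multiset.mem_cons_of_mem hy))
    intro y hy z hz
    apply hrel y (Multiset.mem_cons_of_mem hy)
    by_cases hxy : x = y
    · subst hxy
      rw [Multiset.erase_cons_head]
      exact Multiset.mem_of_mem_erase hz
    · rw [Multiset.erase_cons_tail]
      · exact Multiset.mem_cons_of_mem hz
      · exact hxy


theorem atom_squarefree (M : Submonoid H)
    (hL : ∀ a ∈ M, (¬ ∃ b c : H, b ∈ M ∧ c ∈ M ∧ ¬ IsUnit b ∧ a = b ^ 2 * c) → Squarefree a)
    {a : H} (ha : IsAtomM M a) : Squarefree a := by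
  apply hL a ha.1
  rintro ⟨b, c, hbM, hcM, hbu, habc⟩
  rcases ha.2.2 b (b * c) hbM (M.mul_mem hbM hcM) (by rw [habc, pow_two, mul_assoc]) with h | h
  · exact hbu h
  · exact hbu (isUnit_of_mul_isUnit_left h)

theorem assoc_of_common (M : Submonoid H) (hunits : ∀ u : H, IsUnit u → u ∈ M)
    (hL : ∀ a ∈ M, (¬ ∃ b c : H, b ∈ M ∧ c ∈ M ∧ ¬ IsUnit b ∧ a = b ^ 2 * c) → Squarefree a) :
    ∀ (n : ℕ) (a b : H), IsAtomM M a → IsAtomM M b → Len hfact a + Len hfact b ≤ n →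
      ∀ d : H, ¬ IsUnit d → d ∣ a → d ∣ b → Associated a b := by
  intro n
  induction n with
  | zero =>
    intro a b ha hb hlen
    exact absurd hlen (by have := len_pos hfact ha.2.1; have := len_pos hfact hb.2.1; omega)
  | succ n ih =>
    intro a b ha hb hlen d hd hda hdb
    obtain ⟨p, hp, hpd⟩ := exists_myprime_dvd hfact hd
    have hpa : p ∣ a := hpd.trans hda
    have hpb : p ∣ b := hpd.trans hdb
    have habM : a * b ∈ M := M.mul_mem ha.1 hb.1
    have hnsf : ¬ Squarefree (a * b) := fun h => hp.1 (h p (mul_dvd_mul hpa hpb))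
    have hex : ∃ e c : H, e ∈ M ∧ c ∈ M ∧ ¬ IsUnit e ∧ a * b = e ^ 2 * c := by
      by_contra hne
      exact hnsf (hL (a * b) habM hne)
    obtain ⟨e, c, heM, hcM, heu, habe⟩ := hex
    obtain ⟨le, hle0, hleatom, hlep⟩ :=
      exists_atom_factorization hfact M (Len hfact e) e heM heu le_rfl
    obtain ⟨v, hv⟩ := Multiset.exists_mem_of_ne_zero hle0
    obtain ⟨te, rfl⟩ := Multiset.exists_cons_of_mem hv
    have hvatom : IsAtomM M v := hleatom v (Multiset.mem_cons_self v te)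
    have hteM : te.prod ∈ M :=
      Submonoid.multiset_prod_mem M te (fun x hx => (hleatom x (Multiset.mem_cons_of_mem hx)).1)
    rw [Multiset.prod_cons] at hlep
    have hc'M : te.prod ^ 2 * c ∈ M := M.mul_mem (pow_mem hteM 2) hcM
    set c' : H := te.prod ^ 2 * c with hc'
    have habv : a * b = v ^ 2 * c' := by
      rw [habe, ← hlep, mul_pow, mul_assoc]
    have hsa : Squarefree a := atom_squarefree M hL ha
    have hsb : Squarefree b := atom_squarefree M hL hb
    have hsv : Squarefree v := atom_squarefree M hL hvatom
    have hkey : ∀ q : H, MyPrime q → q ∣ v → q ∣ a ∧ q ∣ b := by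
      intro q hq hqv
      have hq2 : q * q ∣ a * b := by
        rw [habv]
        exact Dvd.dvd.mul_right (by rw [pow_two]; exact mul_dvd_mul hqv hqv) c'
      rcases hq.2 a b ((dvd_mul_right q q).trans hq2) with h | h
      · exact ⟨h, prime_sq_dvd_mul hq hsa hq2 h⟩
      · exact ⟨prime_sq_dvd_mul hq hsb (by rwa [mul_comm a b] at hq2) h, h⟩
    obtain ⟨lv, hlv, hlvp, _⟩ := exists_fact hfact hvatom.2.1
    have hva : v ∣ a := by
      rw [← hlvp]
      exact prods_dvd lv hlv (by rw [hlvp]; exact hsv) a hsa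
        (fun q hqm => (hkey q (hlv q hqm) (hlvp ▸ Multiset.dvd_prod hqm)).1)
    have hvb : v ∣ b := by
      rw [← hlvp]
      exact prods_dvd lv hlv (by rw [hlvp]; exact hsv) b hsb
        (fun q hqm => (hkey q (hlv q hqm) (hlvp ▸ Multiset.dvd_prod hqm)).2)
    obtain ⟨a1, ha1⟩ := hva
    obtain ⟨b1, hb1⟩ := hvb
    have hc'eq : c' = a1 * b1 := by
      have h5 : v * (v * c') = v * (v * (a1 * b1)) := by
        calc v * (v * c') = v ^ 2 * c' := by rw [pow_two, mul_assoc]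
          _ = (v * a1) * (v * b1) := by rw [← habv, ha1, hb1]
          _ = v * (v * (a1 * b1)) := by
              simp only [mul_comm, mul_left_comm, mul_assoc]
      exact mul_left_cancel (mul_left_cancel h5)
    by_cases hu1 : IsUnit a1
    · by_cases hu2 : IsUnit b1
      · obtain ⟨ua, hua⟩ := hu1
        obtain ⟨ub, hub⟩ := hu2
        have h1 : Associated v a := ⟨ua, by rw [hua, ← ha1]⟩
        have h2 : Associated v b := ⟨ub, by rw [hub, ← hb1]⟩
        exact h1.symm.trans h2
      · exfalso
        obtain ⟨ua, hua⟩ := hu1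
        have hb1M : b1 ∈ M := by
          have heq : (↑ua⁻¹ : H) * c' = b1 := by
            rw [hc'eq, ← hua, ← mul_assoc, Units.inv_mul, one_mul]
          rw [← heq]
          exact M.mul_mem (hunits _ ua⁻¹.isUnit) hc'M
        rcases hb.2.2 v b1 hvatom.1 hb1M hb1 with h | h
        · exact hvatom.2.1 h
        · exact hu2 h
    · by_cases hu2 : IsUnit b1
      · exfalso
        obtain ⟨ub, hub⟩ := hu2
        have ha1M : a1 ∈ M := by
          have heq : (↑ub⁻¹ : H) * c' = a1 := by
            rw [hc'eq, ← hub, mul_comm a1, ← mul_assoc, Units.inv_mul, one_mul]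
          rw [← heq]
          exact M.mul_mem (hunits _ ub⁻¹.isUnit) hc'M
        rcases ha.2.2 v a1 hvatom.1 ha1M ha1 with h | h
        · exact hvatom.2.1 h
        · exact hu1 h
      · have hla := len_mul hfact hvatom.2.1 hu1
        rw [← ha1] at hla
        have hlb := len_mul hfact hvatom.2.1 hu2
        rw [← hb1] at hlb
        have hpa1 := len_pos hfact hu1
        have hpb1 := len_pos hfact hu2
        have h1 : Associated v a :=
          ih v a hvatom ha (by omega) v hvatom.2.1 dvd_rfl ⟨a1, ha1⟩
        have h2 : Associated v b :=
          ih v b hvatom hb (by omega) v hvatom.2.1 dvd_rfl ⟨b1, hb1⟩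
        exact h1.symm.trans h2

end Aux

theorem stmt_10 {H : Type*} [CancelCommMonoid H]
    (hfact : ∀ a : H, IsUnit a ∨ ∃ l : Multiset H, (∀ p ∈ l, ¬ IsUnit p ∧ ∀ b c : H, p ∣ b * c → p ∣ b ∨ p ∣ c) ∧ l.prod = a)
    (M : Submonoid H) (hunits : ∀ u : H, IsUnit u → u ∈ M) :
    (∀ a ∈ M, (¬ ∃ b c : H, b ∈ M ∧ c ∈ M ∧ ¬ IsUnit b ∧ a = b ^ 2 * c) →
      Squarefree a) ↔
    ((∀ a ∈ M, ¬ IsUnit a →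
        (∀ b c : H, b ∈ M → c ∈ M → a = b * c → IsUnit b ∨ IsUnit c) →
        Squarefree a) ∧
      (∀ a b : H, a ∈ M → b ∈ M → ¬ IsUnit a → ¬ IsUnit b →
        (∀ b' c : H, b' ∈ M → c ∈ M → a = b' * c → IsUnit b' ∨ IsUnit c) →
        (∀ b' c : H, b' ∈ M → c ∈ M → b = b' * c → IsUnit b' ∨ IsUnit c) →
        ¬ Associated a b → IsRelPrime a b)) := by
  classical
  have hfact' : ∀ a : H, IsUnit a ∨ ∃ l : Multiset H, (∀ p ∈ l, MyPrime p) ∧ l.prod = a := hfact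
  constructor
  · intro hL
    constructor
    · intro a haM hau hat
      exact atom_squarefree M hL ⟨haM, hau, hat⟩
    · intro a b haM hbM hau hbu hata hatb hne
      intro d hda hdb
      by_contra hdu
      exact hne (assoc_of_common hfact' M hunits hL (Len hfact' a + Len hfact' b) a b
        ⟨haM, hau, hata⟩ ⟨hbM, hbu, hatb⟩ le_rfl d hdu hda hdb)
  · rintro ⟨h1, h2⟩ a haM hsq
    by_cases hau : IsUnit a
    · exact hau.squarefree
    obtain ⟨l, hl0, hlatom, hlp⟩ :=
      exists_atom_factorization hfact' M (Len hfact' a) a haM hau le_rfl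
    have hP : ∀ x ∈ l, ∀ y ∈ l.erase x, IsRelPrime x y := by
      intro x hx y hy
      have hxa : IsAtomM M x := hlatom x hx
      have hya : IsAtomM M y := hlatom y (Multiset.mem_of_mem_erase hy)
      by_cases hass : Associated x y
      · exfalso
        apply hsq
        obtain ⟨u, hu⟩ := hass
        obtain ⟨t, ht⟩ := Multiset.exists_cons_of_mem hy
        have hlx : l = x ::ₘ y ::ₘ t := by rw [← ht, Multiset.cons_erase hx]
        have htM : t.prod ∈ M := Submonoid.multiset_prod_mem M t (fun z hz =>
          (hlatom z (by rw [hlx]; exact Multiset.mem_cons_of_mem (Multiset.mem_cons_of_mem hz))).1)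
        refine ⟨x, ↑u * t.prod, hxa.1, M.mul_mem (hunits _ u.isUnit) htM, hxa.2.1, ?_⟩
        rw [← hlp, hlx, Multiset.prod_cons, Multiset.prod_cons, ← hu, pow_two]
        simp only [mul_comm, mul_left_comm, mul_assoc]
      · exact h2 x y hxa.1 hya.1 hxa.2.1 hya.2.1 hxa.2.2 hya.2.2 hass
    have hres := sf_prod hfact' l
      (fun x hx => h1 x (hlatom x hx).1 (hlatom x hx).2.1 (hlatom x hx).2.2) hP
    rwa [hlp] at hres
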